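/- Let G_cube be the group of n×n signed permutation matrices acting on functions on {-1,1}ⁿ by (g·f)(x) = f(g⁻¹x). For each 0 ≤ k ≤ n, the subspace Pol_k(C_n) of functions spanned by the square-free monomials x^I with |I| = k is an irreducible G_cube-invariant subspace of the space of functions on {-1,1}ⁿ, and F({-1,1}ⁿ, ℝ) = Pol₀ ⊕ Pol₁ ⊕ ⋯ ⊕ Pol_n. -/

import Mathlib

/-- The hypercube `C_n = {-1,1}ⁿ`, as a type. -/
def Cube (n : ℕ) : Type := {x : Fin n → ℝ // ∀ i, x i = 1 ∨ x i = -1}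

/-- The action of a signed permutation (given by a permutation `σ` and signs `ε`) on
the hypercube: `x ↦ (ε i * x (σ i))_i`. -/
def signedAct (n : ℕ) (σ : Equiv.Perm (Fin n)) (ε : Fin n → ℝ)
    (hε : ∀ i, ε i = 1 ∨ ε i = -1) (x : Cube n) : Cube n :=
  ⟨fun i => ε i * x.1 (σ i), by
    intro i
    rcases hε i with h | h <;> rcases x.2 (σ i) with h' | h' <;>
      simp [h, h']⟩

/-- A subspace of functions on the hypercube is `G_cube`-invariant if it is preserved
by all signed permutations. -/
def IsCubeInvariant (n : ℕ) (V : Submodule ℝ (Cube n → ℝ)) : Prop :=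
  ∀ (σ : Equiv.Perm (Fin n)) (ε : Fin n → ℝ) (hε : ∀ i, ε i = 1 ∨ ε i = -1),
    ∀ f ∈ V, (fun x => f (signedAct n σ ε hε x)) ∈ V

/-- `Pol_k(C_n)`: the span of the square-free monomials `x^I` with `|I| = k`. -/
def PolCube (n k : ℕ) : Submodule ℝ (Cube n → ℝ) :=
  Submodule.span ℝ
    {f | ∃ I : Finset (Fin n), I.card = k ∧ f = fun x : Cube n => ∏ i ∈ I, x.1 i}

namespace PolCubeAux

variable {n : ℕ}

instance : CommMonoid (Cube n) where
  mul x y := ⟨fun i => x.1 i * y.1 i, by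
    intro i
    rcases x.2 i with h | h <;> rcases y.2 i with h' | h' <;> simp [h, h']⟩
  one := ⟨fun _ => 1, fun _ => Or.inl rfl⟩
  mul_assoc x y z := Subtype.ext (funext fun i => mul_assoc _ _ _)
  one_mul x := Subtype.ext (funext fun i => one_mul _)
  mul_one x := Subtype.ext (funext fun i => mul_one _)
  mul_comm x y := Subtype.ext (funext fun i => mul_comm _ _)

lemma mul_val (x y : Cube n) (i : Fin n) : (x * y).1 i = x.1 i * y.1 i := rfl

lemma one_val (i : Fin n) : (1 : Cube n).1 i = 1 := rfl

/-- The Walsh character `x ↦ ∏_{i ∈ I} x_i`, as a monoid hom. -/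
def chi (I : Finset (Fin n)) : Cube n →* ℝ where
  toFun x := ∏ i ∈ I, x.1 i
  map_one' := by simp [one_val]
  map_mul' x y := by simp [mul_val, Finset.prod_mul_distrib]

lemma chi_apply (I : Finset (Fin n)) (x : Cube n) : chi I x = ∏ i ∈ I, x.1 i := rfl

/-- The point with `-1` at `i₀` and `1` elsewhere. -/
def pt (i₀ : Fin n) : Cube n :=
  ⟨fun i => if i = i₀ then -1 else 1, by intro i; dsimp only; split <;> simp⟩

lemma chi_pt (I : Finset (Fin n)) (i₀ : Fin n) :
    chi I (pt i₀) = if i₀ ∈ I then (-1 : ℝ) else 1 := by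
  rw [chi_apply]
  simp [pt, Finset.prod_ite_eq']

lemma chi_injective : Function.Injective (chi (n := n)) := by
  intro I J h
  ext i
  have := congrArg (fun f : Cube n →* ℝ => f (pt i)) h
  simp only [chi_pt] at this
  by_contra hc
  rcases Decidable.em (i ∈ I) with hI | hI <;> rcases Decidable.em (i ∈ J) with hJ | hJ <;>
    simp [hI, hJ] at this hc <;> norm_num at this

lemma chi_li : LinearIndependent ℝ (fun I : Finset (Fin n) => (chi I : Cube n → ℝ)) :=
  (linearIndependent_monoidHom (Cube n) ℝ).comp chi chi_injective

/-- The cube is equivalent to `Fin n → Bool`. -/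
noncomputable def cubeEquiv : (Fin n → Bool) ≃ Cube n where
  toFun b := ⟨fun i => if b i then 1 else -1, by intro i; dsimp only; split <;> simp⟩
  invFun x := fun i => decide (x.1 i = 1)
  left_inv b := by
    funext i
    cases h : b i <;> simp [h] <;> norm_num
  right_inv x := by
    apply Subtype.ext
    funext i
    rcases x.2 i with h | h <;> simp [h] <;> norm_num

noncomputable instance : Fintype (Cube n) := Fintype.ofEquiv _ cubeEquiv

lemma card_cube : Fintype.card (Cube n) = 2 ^ n := by
  rw [← Fintype.card_congr (cubeEquiv (n := n))]
  simp

lemma span_chi_top :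
    Submodule.span ℝ (Set.range fun I : Finset (Fin n) => (chi I : Cube n → ℝ)) = ⊤ := by
  apply Submodule.eq_top_of_finrank_eq
  rw [finrank_span_eq_card chi_li]
  rw [Module.finrank_fintype_fun_eq_card, card_cube, Fintype.card_finset, Fintype.card_fin]

/-- The Walsh basis of the space of functions on the cube. -/
noncomputable def walsh : Module.Basis (Finset (Fin n)) ℝ (Cube n → ℝ) :=
  Module.Basis.mk chi_li (le_of_eq span_chi_top.symm)

lemma coe_walsh : ⇑(walsh (n := n)) = fun I => (chi I : Cube n → ℝ) := Module.Basis.coe_mk _ _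

lemma pol_eq (k : ℕ) :
    PolCube n k =
      Submodule.span ℝ (⇑(walsh (n := n)) '' {I : Finset (Fin n) | I.card = k}) := by
  have hset : {f | ∃ I : Finset (Fin n), I.card = k ∧ f = fun x : Cube n => ∏ i ∈ I, x.1 i}
      = (fun I : Finset (Fin n) => (chi I : Cube n → ℝ)) '' {I : Finset (Fin n) | I.card = k} := by
    ext f
    constructor
    · rintro ⟨I, hI, rfl⟩
      exact ⟨I, hI, rfl⟩
    · rintro ⟨I, hI, rfl⟩
      exact ⟨I, hI, rfl⟩
  rw [coe_walsh, PolCube, hset]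

/-- The linear action of a signed permutation on functions. -/
def actL (σ : Equiv.Perm (Fin n)) (ε : Fin n → ℝ) (hε : ∀ i, ε i = 1 ∨ ε i = -1) :
    (Cube n → ℝ) →ₗ[ℝ] (Cube n → ℝ) where
  toFun f := fun x => f (signedAct n σ ε hε x)
  map_add' f g := rfl
  map_smul' c f := rfl

lemma actL_chi (σ : Equiv.Perm (Fin n)) (ε : Fin n → ℝ) (hε : ∀ i, ε i = 1 ∨ ε i = -1)
    (I : Finset (Fin n)) :
    actL σ ε hε (chi I) = (∏ i ∈ I, ε i) • (chi (I.image σ) : Cube n → ℝ) := by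
  funext x
  simp only [actL, LinearMap.coe_mk, AddHom.coe_mk, chi_apply, signedAct, Pi.smul_apply,
    smul_eq_mul]
  rw [Finset.prod_image (fun a _ b _ h => σ.injective h)]
  erw [chi_apply]
  rw [Finset.prod_mul_distrib]

lemma pol_invariant (k : ℕ) : IsCubeInvariant n (PolCube n k) := by
  intro σ ε hε f hf
  have hmap : Submodule.map (actL σ ε hε) (PolCube n k) ≤ PolCube n k := by
    unfold PolCube
    rw [Submodule.map_span, Submodule.span_le]
    rintro g ⟨g', ⟨I, hI, rfl⟩, rfl⟩
    have : actL σ ε hε (fun x : Cube n => ∏ i ∈ I, x.1 i) =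
        (∏ i ∈ I, ε i) • (chi (I.image σ) : Cube n → ℝ) := actL_chi σ ε hε I
    rw [this]
    refine Submodule.smul_mem _ _ (Submodule.subset_span ?_)
    exact ⟨I.image σ, by rw [Finset.card_image_of_injective _ σ.injective, hI], rfl⟩
  exact hmap ⟨f, hf, rfl⟩

lemma pol_ne_bot {k : ℕ} (hk : k ≤ n) : PolCube n k ≠ ⊥ := by
  obtain ⟨I, -, hI⟩ := Finset.exists_subset_card_eq (by simpa using hk :
    k ≤ (Finset.univ : Finset (Fin n)).card)
  have hmem : (chi I : Cube n → ℝ) ∈ PolCube n k := Submodule.subset_span ⟨I, hI, rfl⟩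
  have hne : (chi I : Cube n → ℝ) ≠ 0 := by
    intro h
    have := congrFun h 1
    simp [map_one] at this
  exact fun hbot => hne (by simpa [hbot] using hmem)

/-- sign of a boolean -/
def sg (b : Bool) : ℝ := if b then 1 else -1

lemma sg_mul_self (b : Bool) : sg b * sg b = 1 := by cases b <;> simp [sg]

lemma sum_sg_prod (S : Finset (Fin n)) :
    ∑ b : Fin n → Bool, ∏ i ∈ S, sg (b i) = if S = ∅ then (2 ^ n : ℝ) else 0 := by
  have h1 : ∀ b : Fin n → Bool, ∏ i ∈ S, sg (b i)
      = ∏ i : Fin n, (if i ∈ S then sg (b i) else 1) := by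
    intro b
    rw [Finset.prod_ite_mem, Finset.univ_inter]
  simp_rw [h1]
  have h2 : ∑ b : Fin n → Bool, ∏ i : Fin n, (if i ∈ S then sg (b i) else 1)
      = ∏ i : Fin n, ∑ t : Bool, (if i ∈ S then sg t else 1) := by
    rw [Finset.prod_univ_sum]
    rw [Fintype.piFinset_univ]
  rw [h2]
  have h3 : ∀ i : Fin n, (∑ t : Bool, (if i ∈ S then sg t else 1))
      = if i ∈ S then 0 else 2 := by
    intro i
    by_cases h : i ∈ S <;> simp [h, sg]
  simp_rw [h3]
  by_cases hS : S = ∅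
  · simp [hS]
  · obtain ⟨i, hi⟩ := Finset.nonempty_iff_ne_empty.2 hS
    rw [if_neg hS]
    exact Finset.prod_eq_zero (Finset.mem_univ i) (by simp [hi])

lemma prod_sg_mul (b : Fin n → Bool) (I J : Finset (Fin n)) :
    (∏ i ∈ J, sg (b i)) * ∏ i ∈ I, sg (b i) = ∏ i ∈ symmDiff J I, sg (b i) := by
  rw [← Finset.prod_union_inter]
  have h : J ∪ I = (symmDiff J I) ∪ (J ∩ I) := by
    have h2 := symmDiff_sup_inf (a := J) (b := I)
    simp only [Finset.sup_eq_union, Finset.inf_eq_inter] at h2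
    exact h2.symm
  rw [h, Finset.prod_union (show Disjoint (symmDiff J I) (J ∩ I) from disjoint_symmDiff_inf J I)]
  rw [mul_assoc, ← Finset.prod_mul_distrib]
  simp [sg_mul_self]

lemma sum_sg_orth (I J : Finset (Fin n)) :
    ∑ b : Fin n → Bool, (∏ i ∈ J, sg (b i)) * ∏ i ∈ I, sg (b i)
      = if J = I then (2 ^ n : ℝ) else 0 := by
  simp_rw [prod_sg_mul]
  rw [sum_sg_prod]
  congr 1
  simp [Finset.symmDiff_eq_empty]

lemma sg_one_or (b : Bool) : sg b = 1 ∨ sg b = -1 := by cases b <;> simp [sg]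

end PolCubeAux

open PolCubeAux in
theorem polCube_irreducible_decomposition (n : ℕ) :
    (∀ k ≤ n,
      PolCube n k ≠ ⊥ ∧
      IsCubeInvariant n (PolCube n k) ∧
      ∀ V : Submodule ℝ (Cube n → ℝ), V ≤ PolCube n k → IsCubeInvariant n V →
        V = ⊥ ∨ V = PolCube n k) ∧
    DirectSum.IsInternal (fun j : Fin (n + 1) => PolCube n (j : ℕ)) := by
  constructor
  · intro k hk
    refine ⟨pol_ne_bot hk, pol_invariant k, ?_⟩
    intro V hVle hVinv
    by_cases hbot : V = ⊥
    · exact Or.inl hbot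
    right
    -- there is a nonzero f in V
    obtain ⟨f, hfV, hfne⟩ := Submodule.exists_mem_ne_zero_of_ne_bot hbot
    -- its walsh coefficients are supported on sets of card k
    have hsupp : ↑((walsh (n := n)).repr f).support ⊆ {I : Finset (Fin n) | I.card = k} := by
      rw [← Module.Basis.mem_span_image, ← pol_eq]
      exact hVle hfV
    obtain ⟨J, hJ⟩ : ∃ J, ((walsh (n := n)).repr f) J ≠ 0 := by
      by_contra h
      push_neg at h
      apply hfne
      have h0 : (walsh (n := n)).repr f = 0 := Finsupp.ext h
      simpa using congrArg (walsh (n := n)).repr.symm h0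
    have hJcard : J.card = k := hsupp (Finsupp.mem_support_iff.2 hJ)
    set r : Finset (Fin n) →₀ ℝ := (walsh (n := n)).repr f with hr
    -- project onto the J-th character inside V
    have hchiJ : (chi J : Cube n → ℝ) ∈ V := by
      set g : Cube n → ℝ :=
        ∑ b : Fin n → Bool, (∏ i ∈ J, sg (b i)) •
          actL (1 : Equiv.Perm (Fin n)) (fun i => sg (b i)) (fun i => sg_one_or (b i)) f
        with hg
      have hgV : g ∈ V := by
        apply Submodule.sum_mem
        intro b _
        exact Submodule.smul_mem _ _
          (hVinv 1 (fun i => sg (b i)) (fun i => sg_one_or (b i)) f hfV)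
      have hgval : g = ((2 ^ n : ℝ) * r J) • (chi J : Cube n → ℝ) := by
        have hf : f = ∑ I : Finset (Fin n), r I • (chi I : Cube n → ℝ) := by
          conv_lhs => rw [← (walsh (n := n)).sum_repr f]
          simp [coe_walsh, hr]
        have hact : ∀ (b : Fin n → Bool),
            actL (1 : Equiv.Perm (Fin n)) (fun i => sg (b i)) (fun i => sg_one_or (b i)) f
            = ∑ I : Finset (Fin n), (r I * ∏ i ∈ I, sg (b i)) • (chi I : Cube n → ℝ) := by
          intro b
          conv_lhs => rw [hf]
          rw [map_sum]
          refine Finset.sum_congr rfl fun I _ => ?_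
          rw [LinearMap.map_smul, actL_chi]
          have himg : (I.image (1 : Equiv.Perm (Fin n))) = I := by
            ext i; simp
          rw [himg, smul_smul, mul_comm (r I)]
        rw [hg]
        simp_rw [hact, Finset.smul_sum, smul_smul]
        rw [Finset.sum_comm]
        have hsum : ∀ I : Finset (Fin n),
            (∑ b : Fin n → Bool,
              ((∏ i ∈ J, sg (b i)) * (r I * ∏ i ∈ I, sg (b i))) • (chi I : Cube n → ℝ))
            = (if J = I then (r J * 2 ^ n : ℝ) else 0) • (chi I : Cube n → ℝ) := by
          intro I
          rw [← Finset.sum_smul]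
          congr 1
          simp_rw [mul_left_comm _ (r I)]
          rw [← Finset.mul_sum, sum_sg_orth]
          split_ifs with h
          · rw [h]
          · ring
        simp_rw [hsum]
        simp_rw [ite_smul, zero_smul]
        rw [Finset.sum_ite_eq]
        simp [mul_comm]
      have h2 : ((2 ^ n : ℝ) * r J) ≠ 0 :=
        mul_ne_zero (by positivity) hJ
      have := V.smul_mem ((2 ^ n : ℝ) * r J)⁻¹ (hgval ▸ hgV)
      rwa [inv_smul_smul₀ h2] at this
    -- every generator of PolCube n k lies in V
    refine le_antisymm hVle ?_
    rw [PolCube, Submodule.span_le]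
    rintro g ⟨I, hI, rfl⟩
    have hcard : Fintype.card {x // x ∈ J} = Fintype.card {x // x ∈ I} := by
      simp only [Fintype.card_coe, hJcard, hI]
    let e : {x // x ∈ J} ≃ {x // x ∈ I} := Fintype.equivOfCardEq hcard
    set σ : Equiv.Perm (Fin n) := e.extendSubtype with hσ
    have himg : J.image σ = I := by
      apply Finset.eq_of_subset_of_card_le
      · intro i hi
        obtain ⟨a, ha, rfl⟩ := Finset.mem_image.1 hi
        exact e.extendSubtype_mem a ha
      · rw [Finset.card_image_of_injective _ σ.injective, hJcard, hI]
    have hmem := hVinv σ (fun _ => (1 : ℝ)) (fun _ => Or.inl rfl) (chi J) hchiJ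
    have heq : (fun x => (chi J : Cube n → ℝ) (signedAct n σ (fun _ => (1 : ℝ))
        (fun _ => Or.inl rfl) x)) = fun x : Cube n => ∏ i ∈ I, x.1 i := by
      have h := actL_chi σ (fun _ => (1 : ℝ)) (fun _ => Or.inl rfl) J
      simp only [Finset.prod_const_one, one_smul, himg] at h
      exact h
    rw [← heq]
    exact hmem
  · -- internal direct sum decomposition
    apply DirectSum.isInternal_submodule_of_iSupIndep_of_iSup_eq_top
    · rw [iSupIndep_def]
      intro j
      rw [disjoint_iff_inf_le]
      intro x hx
      have h1 : x ∈ Submodule.span ℝ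
          (⇑(walsh (n := n)) '' {I : Finset (Fin n) | I.card = (j : ℕ)}) := by
        rw [← pol_eq]; exact hx.1
      have h2 : x ∈ Submodule.span ℝ
          (⇑(walsh (n := n)) '' {I : Finset (Fin n) | I.card ≠ (j : ℕ)}) := by
        have hle : (⨆ (i) (_ : i ≠ j), PolCube n (i : ℕ)) ≤ Submodule.span ℝ
            (⇑(walsh (n := n)) '' {I : Finset (Fin n) | I.card ≠ (j : ℕ)}) := by
          refine iSup_le fun i => iSup_le fun hij => ?_
          rw [pol_eq]
          apply Submodule.span_mono
          apply Set.image_mono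
          intro I hI
          simp only [Set.mem_setOf_eq] at hI ⊢
          rw [hI]
          exact fun h => hij (Fin.ext h)
        exact hle hx.2
      rw [Module.Basis.mem_span_image] at h1 h2
      have hempty : ((walsh (n := n)).repr x).support = ∅ := by
        rw [← Finset.subset_empty]
        intro I hI
        exact absurd (h1 hI) (h2 hI)
      have h0 : (walsh (n := n)).repr x = 0 := Finsupp.support_eq_empty.1 hempty
      simpa using congrArg (walsh (n := n)).repr.symm h0
    · rw [eq_top_iff, ← span_chi_top, Submodule.span_le]
      rintro g ⟨I, rfl⟩
      have hcard : I.card ≤ n := by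
        simpa using Finset.card_le_univ I
      have hmem : (chi I : Cube n → ℝ) ∈ PolCube n I.card :=
        Submodule.subset_span ⟨I, rfl, rfl⟩
      have : (chi I : Cube n → ℝ) ∈ PolCube n ((⟨I.card, Nat.lt_succ_of_le hcard⟩ :
          Fin (n + 1)) : ℕ) := hmem
      exact SetLike.le_def.1
        (le_iSup (fun j : Fin (n + 1) => PolCube n (j : ℕ))
          ⟨I.card, Nat.lt_succ_of_le hcard⟩) this
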